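/- arXiv:2603.28527 — 2 statements merged into one kernel-verified Lean document; each statement's English description precedes it below -/
import Mathlib

section
/- Let μ be the Haar probability measure on SU(2), and let e₀ = (1,0). For a two-qubit vector Ψ = A|00⟩ + B|01⟩ + C|10⟩ + D|11⟩ define E_lin(Ψ) = 2|AD − BC|². Then for every θ ∈ ℝ, the average entangling power of the exchange gate U(θ) = cos θ·I₄ + i sin θ·SWAP over independent Haar-random product inputs satisfies ∫∫ E_lin( U(θ) ((V e₀) ⊗ (W e₀)) ) dμ(V) dμ(W) = (1 − cos 4θ)/12 = sin²(2θ)/6. In particular the entangling power of √SWAP = U(π/4) equals 1/6. -/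
open Matrix Complex MeasureTheory

noncomputable section

/-- `SU n`: the special unitary group, as the subgroup of the unitary group
`Matrix.unitaryGroup (Fin n) ℂ` consisting of matrices of determinant `1`. -/
def SU (n : ℕ) : Subgroup (Matrix.unitaryGroup (Fin n) ℂ) where
  carrier := {A | (A : Matrix (Fin n) (Fin n) ℂ).det = 1}
  one_mem' := by simp
  mul_mem' := by
    intro a b ha hb
    simp only [Set.mem_setOf_eq, Matrix.UnitaryGroup.mul_val, Matrix.det_mul] at *
    rw [ha, hb, mul_one]
  inv_mem' := by
    intro a ha
    simp only [Set.mem_setOf_eq, Matrix.UnitaryGroup.inv_val] at *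
    rw [Matrix.star_eq_conjTranspose, Matrix.det_conjTranspose, ha, star_one]

/-- The two-qubit SWAP gate on `ℂ² ⊗ ℂ²`. -/
def SWAP : Matrix (Fin 2 × Fin 2) (Fin 2 × Fin 2) ℂ :=
  fun p q => if p = (q.2, q.1) then 1 else 0

/-- The exchange gate `U(θ) = cos θ·I₄ + i sin θ·SWAP`. -/
def U (θ : ℝ) : Matrix (Fin 2 × Fin 2) (Fin 2 × Fin 2) ℂ :=
  (Real.cos θ : ℂ) • (1 : Matrix (Fin 2 × Fin 2) (Fin 2 × Fin 2) ℂ)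
    + (Complex.I * (Real.sin θ : ℂ)) • SWAP

/-- The basis vector `e₀ = (1,0)` of `ℂ²`. -/
def e0 : Fin 2 → ℂ := ![1, 0]

/-- Linear-entropy entanglement of a two-qubit vector `Ψ = A|00⟩+B|01⟩+C|10⟩+D|11⟩`:
`E_lin(Ψ) = 2|AD - BC|²`. -/
def Elin (Ψ : Fin 2 × Fin 2 → ℂ) : ℝ :=
  2 * Complex.normSq (Ψ (0, 0) * Ψ (1, 1) - Ψ (0, 1) * Ψ (1, 0))

/-! ### Auxiliary material -/

lemma stepA (θ : ℝ) (v w : Fin 2 → ℂ) :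
    Elin (U θ *ᵥ fun p => v p.1 * w p.2)
      = Real.sin (2*θ)^2 / 2 * (Complex.normSq (v 0 * w 1 - v 1 * w 0))^2 := by
  have h : ∀ p : Fin 2 × Fin 2, (U θ *ᵥ fun p => v p.1 * w p.2) p =
      (Real.cos θ : ℂ) * (v p.1 * w p.2) + Complex.I * (Real.sin θ : ℂ) * (v p.2 * w p.1) := by
    intro p
    simp only [U, mulVec, dotProduct, Fintype.sum_prod_type, Fin.sum_univ_two,
      Matrix.add_apply, Matrix.smul_apply, Matrix.one_apply, SWAP, smul_eq_mul]
    rcases p with ⟨i, j⟩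
    fin_cases i <;> fin_cases j <;>
      norm_num [Prod.ext_iff, Fin.ext_iff] <;> ring
  rw [Elin, h, h, h, h]
  have key : ((Real.cos θ : ℂ) * (v (0,0).1 * w (0,0).2) + Complex.I * (Real.sin θ : ℂ) * (v (0,0).2 * w (0,0).1)) *
      ((Real.cos θ : ℂ) * (v (1,1).1 * w (1,1).2) + Complex.I * (Real.sin θ : ℂ) * (v (1,1).2 * w (1,1).1)) -
      ((Real.cos θ : ℂ) * (v (0,1).1 * w (0,1).2) + Complex.I * (Real.sin θ : ℂ) * (v (0,1).2 * w (0,1).1)) *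
      ((Real.cos θ : ℂ) * (v (1,0).1 * w (1,0).2) + Complex.I * (Real.sin θ : ℂ) * (v (1,0).2 * w (1,0).1))
      = -(Complex.I * ((Real.sin θ : ℂ) * (Real.cos θ : ℂ))) * (v 0 * w 1 - v 1 * w 0)^2 := by
    show ((Real.cos θ : ℂ) * (v 0 * w 0) + _) * _ - _ * _ = _
    ring
  rw [key]
  simp only [Complex.normSq_mul, Complex.normSq_neg, Complex.normSq_I,
    Complex.normSq_ofReal, map_pow, Real.sin_two_mul]
  ring

/-- the matrix of an element of `SU 2` -/
def mat (V : SU 2) : Matrix (Fin 2) (Fin 2) ℂ :=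
  ((V : Matrix.unitaryGroup (Fin 2) ℂ) : Matrix (Fin 2) (Fin 2) ℂ)

lemma mat_mul (V W : SU 2) : mat (V * W) = mat V * mat W := rfl

lemma det_mat (V : SU 2) : (mat V).det = 1 := V.2

/-- building an element of SU 2 from a unit column -/
def gmk (α γ : ℂ) (h : normSq α + normSq γ = 1) : SU 2 := by
  refine ⟨⟨!![α, -(starRingEnd ℂ) γ; γ, (starRingEnd ℂ) α], ?_⟩, ?_⟩
  · rw [Matrix.mem_unitaryGroup_iff]
    ext i j
    fin_cases i <;> fin_cases j <;>
      simp [Matrix.mul_apply, Fin.sum_univ_two, Matrix.star_apply,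
        Matrix.conjTranspose_apply, Matrix.one_apply]
    · rw [Complex.mul_conj, ← Complex.normSq_eq_conj_mul_self]; norm_cast
    · ring
    · ring
    · rw [Complex.mul_conj, ← Complex.normSq_eq_conj_mul_self]; norm_cast; linarith [h]
  · show (!![α, -(starRingEnd ℂ) γ; γ, (starRingEnd ℂ) α]).det = 1
    rw [Matrix.det_fin_two_of]
    have h' : α * (starRingEnd ℂ) α + γ * (starRingEnd ℂ) γ = 1 := by
      rw [Complex.mul_conj, Complex.mul_conj]
      exact_mod_cast congrArg (Complex.ofReal) h
    linear_combination h'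

lemma mat_gmk (α γ : ℂ) (h : normSq α + normSq γ = 1) :
    mat (gmk α γ h) = !![α, -(starRingEnd ℂ) γ; γ, (starRingEnd ℂ) α] := rfl

/-- top entry of the first column of an element of SU 2 -/
def aa (W : SU 2) : ℂ := mat W 0 0
/-- bottom entry of the first column of an element of SU 2 -/
def cc (W : SU 2) : ℂ := mat W 1 0

lemma aa_mul (α γ : ℂ) (h : normSq α + normSq γ = 1) (W : SU 2) :
    aa (gmk α γ h * W) = α * aa W - (starRingEnd ℂ) γ * cc W := by
  simp [aa, cc, mat_mul, mat_gmk, Matrix.mul_apply, Fin.sum_univ_two]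
  ring

lemma cc_mul (α γ : ℂ) (h : normSq α + normSq γ = 1) (W : SU 2) :
    cc (gmk α γ h * W) = γ * aa W + (starRingEnd ℂ) α * cc W := by
  simp [aa, cc, mat_mul, mat_gmk, Matrix.mul_apply, Fin.sum_univ_two]

/-- squared moduli of the first column -/
def a1 (W : SU 2) : ℝ := normSq (aa W)
def c1 (W : SU 2) : ℝ := normSq (cc W)
def rr (W : SU 2) : ℝ := (aa W * (starRingEnd ℂ) (cc W)).re
def mm (W : SU 2) : ℝ := (aa W * (starRingEnd ℂ) (cc W)).im

lemma col_norm (W : SU 2) : a1 W + c1 W = 1 := by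
  have h := Matrix.UnitaryGroup.star_mul_self (W : Matrix.unitaryGroup (Fin 2) ℂ)
  have h00 := congrFun (congrFun h 0) 0
  simp only [Matrix.mul_apply, Fin.sum_univ_two, Matrix.one_apply,
    Matrix.star_apply, Matrix.conjTranspose_apply, if_pos rfl] at h00
  have : ((a1 W : ℂ)) + (c1 W : ℂ) = 1 := by
    rw [a1, c1, Complex.normSq_eq_conj_mul_self, Complex.normSq_eq_conj_mul_self]
    exact h00
  exact_mod_cast this

lemma a1_nonneg (W : SU 2) : 0 ≤ a1 W := Complex.normSq_nonneg _
lemma c1_nonneg (W : SU 2) : 0 ≤ c1 W := Complex.normSq_nonneg _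
lemma a1_le_one (W : SU 2) : a1 W ≤ 1 := by have := col_norm W; have := c1_nonneg W; linarith
lemma c1_le_one (W : SU 2) : c1 W ≤ 1 := by have := col_norm W; have := a1_nonneg W; linarith

lemma rm_sq (W : SU 2) : rr W ^ 2 + mm W ^ 2 = a1 W * c1 W := by
  have : a1 W * c1 W = normSq (aa W * (starRingEnd ℂ) (cc W)) := by
    rw [Complex.normSq_mul, Complex.normSq_conj, a1, c1]
  rw [this, Complex.normSq_apply, rr, mm]; ring

lemma abs_rr_le (W : SU 2) : |rr W| ≤ 1 := by
  have h1 := rm_sq W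
  have h2 : a1 W * c1 W ≤ 1 :=
    mul_le_one₀ (a1_le_one W) (c1_nonneg W) (c1_le_one W)
  have : rr W ^ 2 ≤ 1 := by nlinarith [sq_nonneg (mm W)]
  nlinarith [abs_nonneg (rr W), _root_.sq_abs (rr W)]

lemma abs_mm_le (W : SU 2) : |mm W| ≤ 1 := by
  have h1 := rm_sq W
  have h2 : a1 W * c1 W ≤ 1 :=
    mul_le_one₀ (a1_le_one W) (c1_nonneg W) (c1_le_one W)
  have : mm W ^ 2 ≤ 1 := by nlinarith [sq_nonneg (rr W)]
  nlinarith [abs_nonneg (mm W), _root_.sq_abs (mm W)]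

/-- continuity of the matrix entries -/
lemma cont_aa : Continuous aa := by
  have h1 : Continuous (fun W : SU 2 => mat W) :=
    continuous_subtype_val.comp continuous_subtype_val
  exact ((continuous_apply (0 : Fin 2)).comp ((continuous_apply (0 : Fin 2)).comp h1))

lemma cont_cc : Continuous cc := by
  have h1 : Continuous (fun W : SU 2 => mat W) :=
    continuous_subtype_val.comp continuous_subtype_val
  exact ((continuous_apply (0 : Fin 2)).comp ((continuous_apply (1 : Fin 2)).comp h1))

lemma cont_a1 : Continuous a1 := Complex.continuous_normSq.comp cont_aa
lemma cont_c1 : Continuous c1 := Complex.continuous_normSq.comp cont_cc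
lemma cont_rr : Continuous rr :=
  Complex.continuous_re.comp (cont_aa.mul (Complex.continuous_conj.comp cont_cc))
lemma cont_mm : Continuous mm :=
  Complex.continuous_im.comp (cont_aa.mul (Complex.continuous_conj.comp cont_cc))

section Moments

variable [MeasurableSpace (SU 2)] [BorelSpace (SU 2)]

instance : ContinuousMul (SU 2) := by
  constructor
  have hm : Continuous fun p : SU 2 × SU 2 =>
      ((p.1 : Matrix.unitaryGroup (Fin 2) ℂ) : Matrix (Fin 2) (Fin 2) ℂ)
      * ((p.2 : Matrix.unitaryGroup (Fin 2) ℂ) : Matrix (Fin 2) (Fin 2) ℂ) :=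
    Continuous.matrix_mul
      ((continuous_subtype_val.comp continuous_subtype_val).comp continuous_fst)
      ((continuous_subtype_val.comp continuous_subtype_val).comp continuous_snd)
  apply continuous_induced_rng.mpr
  apply continuous_induced_rng.mpr
  exact hm

instance : MeasurableMul (SU 2) := by
  constructor
  · intro g
    exact (continuous_const.mul continuous_id).measurable
  · intro g
    exact (continuous_id.mul continuous_const).measurable

variable (μ : Measure (SU 2)) [μ.IsHaarMeasure] [IsProbabilityMeasure μ]

omit [μ.IsHaarMeasure] in
lemma intble {f : SU 2 → ℝ} (hc : Continuous f) (C : ℝ) (hb : ∀ W, |f W| ≤ C) :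
    Integrable f μ := by
  refine (integrable_const C).mono' hc.aestronglyMeasurable ?_
  exact Filter.Eventually.of_forall (fun W => by simpa using hb W)

omit [IsProbabilityMeasure μ] in
lemma hinv (g : SU 2) (f : SU 2 → ℝ) : ∫ W, f (g * W) ∂μ = ∫ W, f W ∂μ :=
  MeasureTheory.integral_mul_left_eq_self f g

/-- The fourth moment: `∫ |c|⁴ = 1/3`. -/
lemma main_moment : ∫ W, c1 W ^ 2 ∂μ = 1 / 3 := by
  -- integrability
  have i_a2 : Integrable (fun W => a1 W ^ 2) μ := by
    refine intble μ (cont_a1.pow 2) 1 (fun W => ?_)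
    rw [_root_.abs_of_nonneg (by positivity)]
    calc a1 W ^ 2 ≤ 1 ^ 2 := pow_le_pow_left₀ (a1_nonneg W) (a1_le_one W) 2
      _ = 1 := one_pow 2
  have i_c2 : Integrable (fun W => c1 W ^ 2) μ := by
    refine intble μ (cont_c1.pow 2) 1 (fun W => ?_)
    rw [_root_.abs_of_nonneg (by positivity)]
    calc c1 W ^ 2 ≤ 1 ^ 2 := pow_le_pow_left₀ (c1_nonneg W) (c1_le_one W) 2
      _ = 1 := one_pow 2
  have i_p : Integrable (fun W => a1 W * c1 W) μ := by
    refine intble μ (cont_a1.mul cont_c1) 1 (fun W => ?_)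
    rw [_root_.abs_of_nonneg (mul_nonneg (a1_nonneg W) (c1_nonneg W))]
    exact mul_le_one₀ (a1_le_one W) (c1_nonneg W) (c1_le_one W)
  have i_r : Integrable rr μ := intble μ cont_rr 1 abs_rr_le
  have i_r2 : Integrable (fun W => rr W ^ 2) μ := by
    refine intble μ (cont_rr.pow 2) 1 (fun W => ?_)
    rw [_root_.abs_of_nonneg (sq_nonneg _)]
    calc rr W ^ 2 = |rr W| ^ 2 := (_root_.sq_abs _).symm
      _ ≤ 1 ^ 2 := pow_le_pow_left₀ (abs_nonneg _) (abs_rr_le W) 2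
      _ = 1 := one_pow 2
  have i_m2 : Integrable (fun W => mm W ^ 2) μ := by
    refine intble μ (cont_mm.pow 2) 1 (fun W => ?_)
    rw [_root_.abs_of_nonneg (sq_nonneg _)]
    calc mm W ^ 2 = |mm W| ^ 2 := (_root_.sq_abs _).symm
      _ ≤ 1 ^ 2 := pow_le_pow_left₀ (abs_nonneg _) (abs_mm_le W) 2
      _ = 1 := one_pow 2
  -- the three group elements
  have hJn : normSq (0:ℂ) + normSq (1:ℂ) = 1 := by simp
  set gJ : SU 2 := gmk 0 1 hJn with hgJ
  have ht2 : ((Real.sqrt 2)⁻¹ : ℝ) * (Real.sqrt 2)⁻¹ = 1/2 := by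
    rw [← mul_inv, Real.mul_self_sqrt (by norm_num)]
    norm_num
  have htc : (((Real.sqrt 2)⁻¹ : ℝ) : ℂ) * (((Real.sqrt 2)⁻¹ : ℝ) : ℂ) = 1/2 := by
    rw [← Complex.ofReal_mul, ht2]
    norm_num
  have hRn : normSq (((Real.sqrt 2)⁻¹ : ℝ) : ℂ) + normSq (((Real.sqrt 2)⁻¹ : ℝ) : ℂ) = 1 := by
    rw [Complex.normSq_ofReal, ht2]; norm_num
  set gR : SU 2 := gmk _ _ hRn with hgR
  have hPn : normSq ((1 + Complex.I) * (((Real.sqrt 2)⁻¹ : ℝ) : ℂ)) + normSq (0:ℂ) = 1 := by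
    rw [Complex.normSq_mul, Complex.normSq_ofReal, ht2]
    simp [Complex.normSq_apply]
    norm_num
  set gP : SU 2 := gmk _ _ hPn with hgP
  -- actions on column entries
  have hJc : ∀ W, cc (gJ * W) = aa W := by
    intro W; rw [hgJ, cc_mul]; simp
  have hRa : ∀ W, aa (gR * W) = (((Real.sqrt 2)⁻¹ : ℝ) : ℂ) * (aa W - cc W) := by
    intro W; rw [hgR, aa_mul, Complex.conj_ofReal]; ring
  have hRc : ∀ W, cc (gR * W) = (((Real.sqrt 2)⁻¹ : ℝ) : ℂ) * (aa W + cc W) := by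
    intro W; rw [hgR, cc_mul, Complex.conj_ofReal]; ring
  have hPa : ∀ W, aa (gP * W) = (1 + Complex.I) * (((Real.sqrt 2)⁻¹ : ℝ) : ℂ) * aa W := by
    intro W; rw [hgP, aa_mul, map_zero]; ring
  have hPc : ∀ W, cc (gP * W) = (1 - Complex.I) * (((Real.sqrt 2)⁻¹ : ℝ) : ℂ) * cc W := by
    intro W
    rw [hgP, cc_mul, _root_.map_mul, map_add, _root_.map_one, Complex.conj_I, Complex.conj_ofReal]
    ring
  -- (E2) ∫ c1² = ∫ a1²
  have E2 : ∫ W, c1 W ^ 2 ∂μ = ∫ W, a1 W ^ 2 ∂μ := by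
    rw [← hinv μ gJ (fun W => c1 W ^ 2)]
    refine integral_congr_ae (Filter.Eventually.of_forall fun W => ?_)
    simp only [c1, hJc, a1]
  -- (E1) ∫ a1² + 2 ∫ a1 c1 + ∫ c1² = 1
  have E1 : (∫ W, a1 W ^ 2 ∂μ) + 2 * (∫ W, a1 W * c1 W ∂μ) + (∫ W, c1 W ^ 2 ∂μ) = 1 := by
    have h : ∫ W, (a1 W ^ 2 + 2 * (a1 W * c1 W) + c1 W ^ 2) ∂μ = 1 := by
      have hfun : (fun W => a1 W ^ 2 + 2 * (a1 W * c1 W) + c1 W ^ 2) = fun _ => (1:ℝ) := by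
        funext W
        have := col_norm W
        nlinarith [col_norm W]
      rw [hfun, integral_const, probReal_univ]
      simp
    have hadd1 : ∫ W, (a1 W ^ 2 + 2 * (a1 W * c1 W)) ∂μ
        = (∫ W, a1 W ^ 2 ∂μ) + ∫ W, 2 * (a1 W * c1 W) ∂μ :=
      integral_add i_a2 (i_p.const_mul 2)
    have hadd2 : ∫ W, ((a1 W ^ 2 + 2 * (a1 W * c1 W)) + c1 W ^ 2) ∂μ
        = (∫ W, (a1 W ^ 2 + 2 * (a1 W * c1 W)) ∂μ) + ∫ W, c1 W ^ 2 ∂μ :=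
      integral_add (i_a2.add (i_p.const_mul 2)) i_c2
    have hmul : ∫ W, 2 * (a1 W * c1 W) ∂μ = 2 * ∫ W, a1 W * c1 W ∂μ :=
      integral_const_mul 2 _
    rw [hadd2, hadd1, hmul] at h
    linarith
  -- splitting lemma for the rotated integrands
  have hsplit : ∀ b : ℝ, (∫ W, (1/4 + b * rr W + rr W ^ 2) ∂μ)
      = 1/4 + b * (∫ W, rr W ∂μ) + (∫ W, rr W ^ 2 ∂μ) := by
    intro b
    have s1 : ∫ W, ((1/4 : ℝ) + b * rr W) ∂μ
        = (∫ _W, (1/4 : ℝ) ∂μ) + ∫ W, b * rr W ∂μ :=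
      integral_add (integrable_const _) (i_r.const_mul b)
    have s2 : ∫ W, (((1/4 : ℝ) + b * rr W) + rr W ^ 2) ∂μ
        = (∫ W, ((1/4 : ℝ) + b * rr W) ∂μ) + ∫ W, rr W ^ 2 ∂μ :=
      integral_add ((integrable_const _).add (i_r.const_mul b)) i_r2
    have hmulb : ∫ W, b * rr W ∂μ = b * ∫ W, rr W ∂μ := integral_const_mul b _
    rw [s2, s1, hmulb, integral_const, probReal_univ]
    simp
  -- (E3) ∫ c1² = 1/4 + ∫ r + ∫ r²
  have hc1R : ∀ W, c1 (gR * W) = (1 + 2 * rr W) / 2 := by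
    intro W
    rw [c1, hRc, Complex.normSq_mul, Complex.normSq_ofReal, ht2, Complex.normSq_add]
    have h1 := col_norm W
    rw [a1, c1] at h1
    rw [rr, show normSq (aa W) + normSq (cc W) = 1 from h1]
    ring
  have ha1R : ∀ W, a1 (gR * W) = (1 - 2 * rr W) / 2 := by
    intro W
    rw [a1, hRa, Complex.normSq_mul, Complex.normSq_ofReal, ht2, Complex.normSq_sub]
    have h1 := col_norm W
    rw [a1, c1] at h1
    rw [rr, show normSq (aa W) + normSq (cc W) = 1 from h1]
    ring
  have E3 : ∫ W, c1 W ^ 2 ∂μ = 1/4 + 1 * (∫ W, rr W ∂μ) + (∫ W, rr W ^ 2 ∂μ) := by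
    rw [← hinv μ gR (fun W => c1 W ^ 2), ← hsplit 1]
    refine integral_congr_ae (Filter.Eventually.of_forall fun W => ?_)
    simp only [hc1R W]
    ring
  have E4 : ∫ W, a1 W ^ 2 ∂μ = 1/4 + (-1) * (∫ W, rr W ∂μ) + (∫ W, rr W ^ 2 ∂μ) := by
    rw [← hinv μ gR (fun W => a1 W ^ 2), ← hsplit (-1)]
    refine integral_congr_ae (Filter.Eventually.of_forall fun W => ?_)
    simp only [ha1R W]
    ring
  -- (E6) ∫ r² = ∫ m²
  have hPr : ∀ W, rr (gP * W) = - mm W := by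
    intro W
    have hconj : (starRingEnd ℂ) (cc (gP * W))
        = (1 + Complex.I) * (((Real.sqrt 2)⁻¹ : ℝ) : ℂ) * (starRingEnd ℂ) (cc W) := by
      rw [hPc, _root_.map_mul, _root_.map_mul, map_sub, _root_.map_one, Complex.conj_I,
        Complex.conj_ofReal]
      ring
    have hfac : (1 + Complex.I) * (((Real.sqrt 2)⁻¹ : ℝ) : ℂ)
        * ((1 + Complex.I) * (((Real.sqrt 2)⁻¹ : ℝ) : ℂ)) = Complex.I := by
      have : (1 + Complex.I) * (1 + Complex.I) = 2 * Complex.I := by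
        linear_combination Complex.I_mul_I
      calc (1 + Complex.I) * (((Real.sqrt 2)⁻¹ : ℝ) : ℂ)
          * ((1 + Complex.I) * (((Real.sqrt 2)⁻¹ : ℝ) : ℂ))
          = ((1 + Complex.I) * (1 + Complex.I))
            * ((((Real.sqrt 2)⁻¹ : ℝ) : ℂ) * (((Real.sqrt 2)⁻¹ : ℝ) : ℂ)) := by ring
        _ = (2 * Complex.I) * (1/2) := by rw [this, htc]
        _ = Complex.I := by ring
    have hmul : aa (gP * W) * (starRingEnd ℂ) (cc (gP * W))
        = Complex.I * (aa W * (starRingEnd ℂ) (cc W)) := by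
      rw [hPa, hconj]
      calc (1 + Complex.I) * (((Real.sqrt 2)⁻¹ : ℝ) : ℂ) * aa W
            * ((1 + Complex.I) * (((Real.sqrt 2)⁻¹ : ℝ) : ℂ) * (starRingEnd ℂ) (cc W))
          = ((1 + Complex.I) * (((Real.sqrt 2)⁻¹ : ℝ) : ℂ)
              * ((1 + Complex.I) * (((Real.sqrt 2)⁻¹ : ℝ) : ℂ)))
            * (aa W * (starRingEnd ℂ) (cc W)) := by ring
        _ = _ := by rw [hfac]
    rw [rr, hmul, mm]
    simp [Complex.mul_re]
  have E6 : ∫ W, rr W ^ 2 ∂μ = ∫ W, mm W ^ 2 ∂μ := by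
    rw [← hinv μ gP (fun W => rr W ^ 2)]
    refine integral_congr_ae (Filter.Eventually.of_forall fun W => ?_)
    simp only [hPr W]
    ring
  -- (E7) ∫ a1 c1 = ∫ r² + ∫ m²
  have E7 : ∫ W, a1 W * c1 W ∂μ = (∫ W, rr W ^ 2 ∂μ) + (∫ W, mm W ^ 2 ∂μ) := by
    have e7 : ∫ W, (rr W ^ 2 + mm W ^ 2) ∂μ = (∫ W, rr W ^ 2 ∂μ) + ∫ W, mm W ^ 2 ∂μ :=
      integral_add i_r2 i_m2
    rw [← e7]
    refine integral_congr_ae (Filter.Eventually.of_forall fun W => ?_)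
    exact (rm_sq W).symm
  linarith [E1, E2, E3, E4, E6, E7]

end Moments

lemma mulVec_e0 (M : Matrix (Fin 2) (Fin 2) ℂ) (i : Fin 2) : (M *ᵥ e0) i = M i 0 := by
  simp [mulVec, dotProduct, Fin.sum_univ_two, e0]

lemma detcol (V : SU 2) (x : Fin 2 → ℂ) :
    (mat V *ᵥ e0) 0 * (mat V *ᵥ x) 1 - (mat V *ᵥ e0) 1 * (mat V *ᵥ x) 0 = x 1 := by
  have hd := det_mat V
  rw [Matrix.det_fin_two] at hd
  simp only [mulVec, dotProduct, Fin.sum_univ_two, e0]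
  simp [e0]
  linear_combination x 1 * hd

/-- The entangling power of the exchange gate `U(θ)` averaged over independent
Haar-random product inputs equals `(1 - cos 4θ)/12 = sin²(2θ)/6`. -/
theorem entangling_power_exchange
    [MeasurableSpace (SU 2)] [BorelSpace (SU 2)]
    (μ : Measure (SU 2)) [μ.IsHaarMeasure] [IsProbabilityMeasure μ] (θ : ℝ) :
    (∫ V : SU 2, ∫ W : SU 2,
        Elin (U θ *ᵥ fun p =>
          (((V : Matrix.unitaryGroup (Fin 2) ℂ) : Matrix (Fin 2) (Fin 2) ℂ) *ᵥ e0) p.1 *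
          (((W : Matrix.unitaryGroup (Fin 2) ℂ) : Matrix (Fin 2) (Fin 2) ℂ) *ᵥ e0) p.2)
      ∂μ ∂μ)
      = (1 - Real.cos (4 * θ)) / 12
    ∧ (1 - Real.cos (4 * θ)) / 12 = Real.sin (2 * θ) ^ 2 / 6 := by
  have htrig : (1 - Real.cos (4 * θ)) / 12 = Real.sin (2 * θ) ^ 2 / 6 := by
    have h1 : Real.cos (4 * θ) = 2 * Real.cos (2 * θ) ^ 2 - 1 := by
      rw [show (4:ℝ) * θ = 2 * (2 * θ) by ring]; exact Real.cos_two_mul (2 * θ)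
    have h2 := Real.sin_sq_add_cos_sq (2 * θ)
    linarith
  refine ⟨?_, htrig⟩
  have hin : ∀ V : SU 2,
      (∫ W : SU 2, Elin (U θ *ᵥ fun p => (mat V *ᵥ e0) p.1 * (mat W *ᵥ e0) p.2) ∂μ)
      = Real.sin (2 * θ) ^ 2 / 2 * (1 / 3) := by
    intro V
    have h1 : ∀ W : SU 2,
        Elin (U θ *ᵥ fun p => (mat V *ᵥ e0) p.1 * (mat (V * W) *ᵥ e0) p.2)
        = Real.sin (2 * θ) ^ 2 / 2 * (c1 W) ^ 2 := by
      intro W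
      rw [stepA]
      have hw : mat (V * W) *ᵥ e0 = mat V *ᵥ (mat W *ᵥ e0) := by
        rw [mat_mul, mulVec_mulVec]
      rw [hw, detcol V (mat W *ᵥ e0), mulVec_e0]
      rfl
    calc ∫ W, Elin (U θ *ᵥ fun p => (mat V *ᵥ e0) p.1 * (mat W *ᵥ e0) p.2) ∂μ
        = ∫ W, (fun W' : SU 2 =>
            Elin (U θ *ᵥ fun p => (mat V *ᵥ e0) p.1 * (mat W' *ᵥ e0) p.2)) (V * W) ∂μ :=
          (hinv μ V _).symm
      _ = ∫ W, Real.sin (2 * θ) ^ 2 / 2 * (c1 W) ^ 2 ∂μ :=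
          integral_congr_ae (Filter.Eventually.of_forall fun W => h1 W)
      _ = Real.sin (2 * θ) ^ 2 / 2 * ∫ W, (c1 W) ^ 2 ∂μ :=
          integral_const_mul _ _
      _ = Real.sin (2 * θ) ^ 2 / 2 * (1 / 3) := by rw [main_moment μ]
  calc (∫ V : SU 2, ∫ W : SU 2,
        Elin (U θ *ᵥ fun p => (mat V *ᵥ e0) p.1 * (mat W *ᵥ e0) p.2) ∂μ ∂μ)
      = ∫ _V : SU 2, Real.sin (2 * θ) ^ 2 / 2 * (1 / 3) ∂μ :=
        integral_congr_ae (Filter.Eventually.of_forall fun V => hin V)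
    _ = Real.sin (2 * θ) ^ 2 / 2 * (1 / 3) := by
        rw [integral_const, probReal_univ]; simp
    _ = (1 - Real.cos (4 * θ)) / 12 := by rw [htrig]; ring
end
end

section
/- For a two-qubit vector Ψ = A|00⟩ + B|01⟩ + C|10⟩ + D|11⟩ define E_lin(Ψ) = 2|AD − BC|². For every θ ∈ ℝ and all unit vectors α, β ∈ ℂ², the exchange gate U(θ) = cos θ·I₄ + i sin θ·SWAP satisfies E_lin(U(θ)(α ⊗ β)) ≤ (1/2) sin²(2θ), with equality attained at α = e₀ = (1,0), β = e₁ = (0,1). Hence the maximal linear-entropy entangling power of U(θ) over product inputs is exactly (1/2) sin²(2θ); in particular, for √SWAP = U(π/4) it equals 1/2, the maximum possible for a two-qubit gate in this family. -/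
open Matrix Complex

noncomputable section

lemma key (θ : ℝ) (α β : Fin 2 → ℂ) :
    Elin (U θ *ᵥ fun p => α p.1 * β p.2)
      = (1/2) * Real.sin (2*θ)^2 * (Complex.normSq (α 0 * β 1 - α 1 * β 0))^2 := by
  have h : (U θ *ᵥ fun p => α p.1 * β p.2) (0,0) * (U θ *ᵥ fun p => α p.1 * β p.2) (1,1)
      - (U θ *ᵥ fun p => α p.1 * β p.2) (0,1) * (U θ *ᵥ fun p => α p.1 * β p.2) (1,0)
      = -(Complex.I * Real.sin (2*θ) / 2) * (α 0 * β 1 - α 1 * β 0)^2 := by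
    simp [U, SWAP, mulVec, dotProduct, Fintype.sum_prod_type, Fin.sum_univ_two,
      Matrix.one_apply, Prod.ext_iff, Real.sin_two_mul]
    ring_nf
  rw [Elin, h]
  simp [_root_.map_mul, map_pow, map_div₀, ← Complex.ofReal_sin, Complex.normSq_ofReal]
  ring

/-- The maximal linear-entropy entangling power of `U(θ)` over product inputs is
exactly `(1/2)sin²(2θ)`, attained at `α = e₀`, `β = e₁`. -/
theorem max_entangling_power (θ : ℝ) :
    (∀ α β : Fin 2 → ℂ,
      (∑ i, Complex.normSq (α i)) = 1 → (∑ i, Complex.normSq (β i)) = 1 →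
      Elin (U θ *ᵥ fun p => α p.1 * β p.2) ≤ (1 / 2) * Real.sin (2 * θ) ^ 2)
    ∧ Elin (U θ *ᵥ fun p => (![1, 0] : Fin 2 → ℂ) p.1 * (![0, 1] : Fin 2 → ℂ) p.2)
        = (1 / 2) * Real.sin (2 * θ) ^ 2 := by
  constructor
  · intro α β hα hβ
    rw [key]
    have hns : Complex.normSq (α 0 * β 1 - α 1 * β 0) ≤ 1 := by
      have habs : ‖α 0 * β 1 - α 1 * β 0‖
          ≤ ‖α 0‖ * ‖β 1‖ + ‖α 1‖ * ‖β 0‖ := by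
        calc ‖α 0 * β 1 - α 1 * β 0‖
            ≤ ‖α 0 * β 1‖ + ‖α 1 * β 0‖ :=
              norm_sub_le _ _
          _ = _ := by simp [norm_mul]
      have hα' : ‖α 0‖ ^ 2 + ‖α 1‖ ^ 2 = 1 := by
        simpa [Fin.sum_univ_two, Complex.sq_norm] using hα
      have hβ' : ‖β 0‖ ^ 2 + ‖β 1‖ ^ 2 = 1 := by
        simpa [Fin.sum_univ_two, Complex.sq_norm] using hβ
      rw [← Complex.sq_norm]
      have h0 : (0:ℝ) ≤ ‖α 0 * β 1 - α 1 * β 0‖ := norm_nonneg _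
      nlinarith [sq_nonneg (‖α 0‖ * ‖β 0‖
          - ‖α 1‖ * ‖β 1‖), norm_nonneg (α 0),
        norm_nonneg (α 1), norm_nonneg (β 0),
        norm_nonneg (β 1)]
    have h1 : (Complex.normSq (α 0 * β 1 - α 1 * β 0))^2 ≤ 1 := by
      nlinarith [Complex.normSq_nonneg (α 0 * β 1 - α 1 * β 0)]
    nlinarith [sq_nonneg (Real.sin (2*θ))]
  · rw [key]
    norm_num
end
end
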